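/- Let (ℬ ⊆ 𝒜, E) be a subalgebra system with inclusion matrix A ∈ M_{s×r}(ℕ) and dimension vectors ñ, m̃ satisfying A m̃ = ñ. If (ℬ ⊆ 𝒜, E) admits a unitary orthonormal basis consisting of d unitaries, then Aᵗ ñ = d m̃; consequently Aᵗ A m̃ = d m̃ and A Aᵗ ñ = d ñ. -/

import Mathlib

open Finset Matrix

/-- The unital inclusion of the multi-matrix algebra ℬ = ⊕_j M_{m_j} into
𝒜 = ⊕_i M_{n_i}, where M_{m_j} appears a_{ij} times in the i-th summand. -/
def multiMatrixIncl (s r : ℕ) (m : Fin r → ℕ) (a : Fin s → Fin r → ℕ)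
    (Y : ∀ j, Matrix (Fin (m j)) (Fin (m j)) ℂ) :
    ∀ i, Matrix ((j : Fin r) × (Fin (a i j) × Fin (m j)))
      ((j : Fin r) × (Fin (a i j) × Fin (m j))) ℂ :=
  fun i p q =>
    if h : p.1 = q.1 then
      (if (h ▸ p.2).1 = q.2.1 then Y q.1 ((h ▸ p.2).2) q.2.2 else 0)
    else 0

lemma multiMatrixIncl_one (s r : ℕ) (m : Fin r → ℕ) (a : Fin s → Fin r → ℕ) :
    multiMatrixIncl s r m a 1 = 1 := by
  funext i
  ext ⟨j₁, u₁, v₁⟩ ⟨j₂, u₂, v₂⟩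
  simp only [multiMatrixIncl, Matrix.one_apply, Pi.one_apply]
  by_cases h : j₁ = j₂
  · subst h
    simp only [dif_pos rfl]
    by_cases hu : u₁ = u₂
    · subst hu
      simp only [if_pos rfl, Matrix.one_apply]
      by_cases hv : v₁ = v₂
      · subst hv; simp
      · simp [hv, Sigma.ext_iff, Prod.ext_iff]
    · simp [hu, Sigma.ext_iff, Prod.ext_iff]
  · simp [h, Sigma.ext_iff]

noncomputable def multiMatrixInclL (s r : ℕ) (m : Fin r → ℕ) (a : Fin s → Fin r → ℕ) :
    (∀ j, Matrix (Fin (m j)) (Fin (m j)) ℂ) →ₗ[ℂ]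
    (∀ i, Matrix ((j : Fin r) × (Fin (a i j) × Fin (m j)))
      ((j : Fin r) × (Fin (a i j) × Fin (m j))) ℂ) where
  toFun := multiMatrixIncl s r m a
  map_add' Y Z := by
    funext i; ext p q
    simp only [multiMatrixIncl, Pi.add_apply, Matrix.add_apply]
    split
    · split <;> simp
    · simp
  map_smul' c Y := by
    funext i; ext p q
    simp only [multiMatrixIncl, Pi.smul_apply, Matrix.smul_apply, RingHom.id_apply,
      smul_eq_mul]
    split
    · split <;> simp
    · simp


section aux
lemma single_mul_pi {ι : Type*} [Fintype ι] [DecidableEq ι] {σ : ι → Type*}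
    [∀ i, Fintype (σ i)] [∀ i, DecidableEq (σ i)]
    (i : ι) (M : Matrix (σ i) (σ i) ℂ) (p : ∀ i, Matrix (σ i) (σ i) ℂ) :
    Pi.single i M * p = Pi.single i (M * p i) := by
  funext k
  by_cases h : k = i
  · subst h; simp
  · simp [Pi.single_eq_of_ne h]

lemma trace_mulRight_pi {ι : Type*} [Fintype ι] [DecidableEq ι] (σ : ι → Type*)
    [∀ i, Fintype (σ i)] [∀ i, DecidableEq (σ i)]
    (p : ∀ i, Matrix (σ i) (σ i) ℂ) :
    LinearMap.trace ℂ _ (LinearMap.mulRight ℂ p) =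
      ∑ i, (Fintype.card (σ i) : ℂ) * Matrix.trace (p i) := by
  classical
  let b : Module.Basis ((i : ι) × (σ i × σ i)) ℂ (∀ i, Matrix (σ i) (σ i) ℂ) :=
    Pi.basis fun i => Matrix.stdBasis ℂ (σ i) (σ i)
  rw [LinearMap.trace_eq_matrix_trace ℂ b]
  rw [Matrix.trace]
  have : ∀ k, (LinearMap.toMatrix b b (LinearMap.mulRight ℂ p)).diag k
      = p k.1 k.2.2 k.2.2 := by
    rintro ⟨i, x, y⟩
    rw [Matrix.diag, LinearMap.toMatrix_apply, LinearMap.mulRight_apply]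
    have hb : b ⟨i, (x, y)⟩ = Pi.single i (Matrix.single x y (1:ℂ)) := by
      simp [b, Matrix.stdBasis_eq_single]
    rw [hb, single_mul_pi]
    have h2 : b.repr (Pi.single i (Matrix.single x y (1:ℂ) * p i)) ⟨i, (x, y)⟩
        = (Matrix.single x y (1:ℂ) * p i) x y := by
      simp only [Pi.basis_repr, b, Pi.single_eq_same]; rfl
    rw [h2]
    simp [Matrix.mul_apply, Matrix.single]
  simp_rw [this]
  rw [← Finset.univ_sigma_univ, Finset.sum_sigma]
  refine Finset.sum_congr rfl fun i _ => ?_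
  rw [Fintype.sum_prod_type]
  simp [Matrix.trace, Matrix.diag, Finset.sum_const, mul_comm]
end aux

/-- Spectral condition: if a subalgebra system (ℬ ⊆ 𝒜, E) with inclusion matrix
A and dimension vectors m̃, ñ (A m̃ = ñ) admits a unitary orthonormal basis of d
unitaries, then Aᵗ ñ = d m̃; consequently Aᵗ A m̃ = d m̃ and A Aᵗ ñ = d ñ. -/
theorem spectral_condition
    (s r d : ℕ) (n : Fin s → ℕ) (m : Fin r → ℕ) (a : Fin s → Fin r → ℕ)
    (hn : ∀ i, 0 < n i) (hm : ∀ j, 0 < m j)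
    (hdim : ∀ i, ∑ j, a i j * m j = n i)  -- A m̃ = ñ
    (E : (∀ i, Matrix ((j : Fin r) × (Fin (a i j) × Fin (m j)))
            ((j : Fin r) × (Fin (a i j) × Fin (m j))) ℂ) →ₗ[ℂ]
          (∀ j, Matrix (Fin (m j)) (Fin (m j)) ℂ))
    -- E is a conditional expectation onto ℬ
    (hEfix : ∀ Y, E (multiMatrixIncl s r m a Y) = Y)
    (hEbim : ∀ Y Z X, E (multiMatrixIncl s r m a Y * X * multiMatrixIncl s r m a Z)
      = Y * E X * Z)
    -- a unitary orthonormal basis with d unitaries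
    (W : Fin d → ∀ i, Matrix ((j : Fin r) × (Fin (a i j) × Fin (m j)))
          ((j : Fin r) × (Fin (a i j) × Fin (m j))) ℂ)
    (hWu : ∀ t, W t ∈ unitary (∀ i, Matrix ((j : Fin r) × (Fin (a i j) × Fin (m j)))
          ((j : Fin r) × (Fin (a i j) × Fin (m j))) ℂ))
    (horth : ∀ t t', E (star (W t) * W t') = if t = t' then 1 else 0)
    (hbasis : ∀ X, X = ∑ t, W t * multiMatrixIncl s r m a (E (star (W t) * X))) :
    (∀ j, ∑ i, a i j * n i = d * m j) ∧
    (∀ j, ∑ j', (∑ i, a i j * a i j') * m j' = d * m j) ∧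
    (∀ i, ∑ i', (∑ j, a i j * a i' j) * n i' = d * n i) := by
  classical
  have hEone : ∀ X Z, E (X * multiMatrixIncl s r m a Z) = E X * Z := by
    intro X Z
    have := hEbim 1 Z X
    rwa [multiMatrixIncl_one, one_mul, one_mul] at this
  have part1 : ∀ j, ∑ i, a i j * n i = d * m j := by
    intro j
    set e : ∀ j', Matrix (Fin (m j')) (Fin (m j')) ℂ := Pi.single j 1 with he
    set p := multiMatrixIncl s r m a e with hp
    set f := LinearMap.mulRight ℂ p with hf0
    set g := LinearMap.mulRight ℂ e with hg0
    set ιL := multiMatrixInclL s r m a with hι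
    have hιeq : ∀ Y, ιL Y = multiMatrixIncl s r m a Y := fun Y => rfl
    set U : Fin d → _ := fun t => LinearMap.mulLeft ℂ (W t) ∘ₗ ιL with hU
    set S : Fin d → _ := fun t =>
      LinearMap.mulRight ℂ e ∘ₗ E ∘ₗ LinearMap.mulLeft ℂ (star (W t)) with hS
    have hkey : ∀ (t : Fin d) X, E (star (W t) * (X * p)) = E (star (W t) * X) * e := by
      intro t X; rw [hp, ← mul_assoc, hEone]
    have hfs : f = ∑ t, U t ∘ₗ S t := by
      refine LinearMap.ext fun X => ?_
      simp only [hf0, hU, hS, LinearMap.mulRight_apply, LinearMap.sum_apply,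
        LinearMap.comp_apply, LinearMap.mulLeft_apply, hιeq]
      conv_lhs => rw [hbasis (X * p)]
      exact Finset.sum_congr rfl fun t _ => by rw [hkey]
    have hSU : ∀ t, S t ∘ₗ U t = g := by
      intro t
      refine LinearMap.ext fun Y => ?_
      simp only [hS, hU, hg0, LinearMap.comp_apply, LinearMap.mulLeft_apply,
        LinearMap.mulRight_apply, hιeq]
      rw [← mul_assoc, hEone, horth, if_pos rfl, one_mul]
    have htrace : LinearMap.trace ℂ _ f = d * LinearMap.trace ℂ _ g := by
      rw [hfs, map_sum]
      have h3 : ∀ t : Fin d, LinearMap.trace ℂ _ (U t ∘ₗ S t) = LinearMap.trace ℂ _ g :=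
        fun t => by rw [LinearMap.trace_comp_comm', hSU]
      rw [Finset.sum_congr rfl fun t _ => h3 t]
      simp [Finset.sum_const, mul_comm]
    -- compute trace of g
    have htrg : LinearMap.trace ℂ _ g = (m j : ℂ) * (m j : ℂ) := by
      rw [hg0, trace_mulRight_pi]
      have h4 : ∀ j' : Fin r, Matrix.trace (e j') = if j' = j then (m j : ℂ) else 0 := by
        intro j'
        by_cases h : j' = j
        · subst h; simp [he]
        · simp [he, Pi.single_eq_of_ne h, h]
      simp_rw [h4, mul_ite, mul_zero]
      simp
    -- compute trace of f
    have htrf : LinearMap.trace ℂ _ f =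
        ∑ i, (n i : ℂ) * ((a i j : ℂ) * (m j : ℂ)) := by
      rw [hf0, trace_mulRight_pi]
      refine Finset.sum_congr rfl fun i _ => ?_
      have hcard : (Fintype.card ((j' : Fin r) × (Fin (a i j') × Fin (m j'))) : ℂ)
          = (n i : ℂ) := by
        rw [Fintype.card_sigma]
        simp only [Fintype.card_prod, Fintype.card_fin]
        rw [hdim i]
      rw [hcard]
      congr 1
      have h5 : Matrix.trace (p i) = ∑ q : (j' : Fin r) × (Fin (a i j') × Fin (m j')),
          e q.1 q.2.2 q.2.2 := by
        refine Finset.sum_congr rfl fun q _ => ?_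
        rw [hp]
        simp [multiMatrixIncl]
      rw [h5, ← Finset.univ_sigma_univ, Finset.sum_sigma]
      have h6 : ∀ j' : Fin r, ∑ q : Fin (a i j') × Fin (m j'), e j' q.2 q.2
          = (a i j' : ℂ) * (if j' = j then (m j : ℂ) else 0) := by
        intro j'
        rw [Fintype.sum_prod_type]
        by_cases h : j' = j
        · subst h
          simp [he, Finset.sum_const, Matrix.one_apply]
        · simp [he, Pi.single_eq_of_ne h, h]
      simp_rw [h6, mul_ite, mul_zero]
      simp
    have hfin : (((∑ i, a i j * n i) * m j : ℕ) : ℂ) = ((d * (m j * m j) : ℕ) : ℂ) := by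
      have h1 := htrace
      rw [htrf, htrg] at h1
      push_cast
      rw [Finset.sum_mul, ← h1]
      exact Finset.sum_congr rfl fun i _ => by ring
    have hfin' : (∑ i, a i j * n i) * m j = d * (m j * m j) := Nat.cast_injective hfin
    exact Nat.eq_of_mul_eq_mul_right (hm j) (hfin'.trans (by ring))
  refine ⟨part1, ?_, ?_⟩
  · intro j
    calc ∑ j', (∑ i, a i j * a i j') * m j'
        = ∑ j', ∑ i, a i j * (a i j' * m j') := by
          refine Finset.sum_congr rfl fun j' _ => ?_
          rw [Finset.sum_mul]; refine Finset.sum_congr rfl fun i _ => by ring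
      _ = ∑ i, a i j * ∑ j', a i j' * m j' := by
          rw [Finset.sum_comm]
          exact Finset.sum_congr rfl fun i _ => (Finset.mul_sum _ _ _).symm
      _ = ∑ i, a i j * n i := by
          exact Finset.sum_congr rfl fun i _ => by rw [hdim i]
      _ = d * m j := part1 j
  · intro i
    calc ∑ i', (∑ j, a i j * a i' j) * n i'
        = ∑ i', ∑ j, a i j * (a i' j * n i') := by
          refine Finset.sum_congr rfl fun i' _ => ?_
          rw [Finset.sum_mul]; refine Finset.sum_congr rfl fun j _ => by ring
      _ = ∑ j, a i j * ∑ i', a i' j * n i' := by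
          rw [Finset.sum_comm]
          exact Finset.sum_congr rfl fun j _ => (Finset.mul_sum _ _ _).symm
      _ = ∑ j, a i j * (d * m j) := by
          refine Finset.sum_congr rfl fun j _ => ?_
          congr 1
          rw [← part1 j]
      _ = d * n i := by
          rw [← hdim i, Finset.mul_sum]
          exact Finset.sum_congr rfl fun j _ => by ring
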